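/- Let n be a real number with n ≥ 1, let Y_1, …, Y_T be independent random variables with values in [0, 1], each with expectation μ₀ = f/n for some real f ≥ 1, and let T ≥ n² · ln(2/δ) / ε² for some ε, δ ∈ (0, 1). Then the empirical estimate F̂ = (n/T) · Σ_{t=1}^T Y_t satisfies P[|F̂ − f| ≥ ε·f] ≤ δ. -/

import Mathlib

open MeasureTheory ProbabilityTheory Real


/-- Analytic core of Hoeffding's lemma (weak constant 1/4 suffices). -/
theorem aux15_analytic {m : ℝ} (hm0 : 0 ≤ m) (hm1 : m ≤ 1) {t : ℝ} (ht : 0 ≤ t) :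
    Real.log (1 - m + m * Real.exp t) ≤ m * t + t ^ 2 / 4 := by
  set D : ℝ → ℝ := fun u => 1 - m + m * Real.exp u with hD
  have hDpos : ∀ u, 0 < D u := by
    intro u
    show 0 < 1 - m + m * Real.exp u
    have h1 : 0 < Real.exp u := Real.exp_pos u
    rcases lt_or_ge m 1 with h | h
    · nlinarith
    · have hm : m = 1 := le_antisymm hm1 h
      rw [hm]; simpa using h1
  set ψ : ℝ → ℝ := fun u => m * u + u ^ 2 / 4 - Real.log (D u) with hψdef
  set ψ' : ℝ → ℝ := fun u => m + u / 2 - m * Real.exp u / D u with hψ'def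
  have hDd : ∀ u, HasDerivAt D (m * Real.exp u) u := by
    intro u
    exact ((Real.hasDerivAt_exp u).const_mul m).const_add (1 - m)
  have hψd : ∀ u, HasDerivAt ψ (ψ' u) u := by
    intro u
    have h1 : HasDerivAt (fun u : ℝ => m * u) m u := by
      simpa using (hasDerivAt_id u).const_mul m
    have h2 : HasDerivAt (fun u : ℝ => u ^ 2 / 4) (u / 2) u := by
      have : HasDerivAt (fun u : ℝ => u ^ 2 / 4) ((2:ℕ) * u ^ (2 - 1) / 4) u :=
        (hasDerivAt_pow 2 u).div_const 4
      convert this using 1; ring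
    have h3 : HasDerivAt (fun u => Real.log (D u)) (m * Real.exp u / D u) u :=
      (hDd u).log (hDpos u).ne'
    exact (h1.add h2).sub h3
  have hψ'd : ∀ u, HasDerivAt ψ'
      (1 / 2 - m * (1 - m) * Real.exp u / (D u) ^ 2) u := by
    intro u
    have h1 : HasDerivAt (fun u : ℝ => m + u / 2) (1 / 2) u := by
      simpa using ((hasDerivAt_id u).div_const 2).const_add m
    have hnum : HasDerivAt (fun u => m * Real.exp u) (m * Real.exp u) u :=
      (Real.hasDerivAt_exp u).const_mul m
    have h2 : HasDerivAt (fun u => m * Real.exp u / D u)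
        ((m * Real.exp u * D u - m * Real.exp u * (m * Real.exp u)) / (D u) ^ 2) u :=
      hnum.div (hDd u) (hDpos u).ne'
    have h2' : HasDerivAt (fun u => m * Real.exp u / D u)
        (m * (1 - m) * Real.exp u / (D u) ^ 2) u := by
      convert h2 using 1
      simp only [hD]
      ring
    exact h1.sub h2'
  have hψ''nonneg : ∀ u, 0 ≤ 1 / 2 - m * (1 - m) * Real.exp u / (D u) ^ 2 := by
    intro u
    have hD2 : 0 < (D u) ^ 2 := pow_pos (hDpos u) 2
    rw [sub_nonneg, div_le_iff₀ hD2]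
    have h1 : 0 < Real.exp u := Real.exp_pos u
    have : 4 * ((1 - m) * (m * Real.exp u)) ≤ ((1 - m) + m * Real.exp u) ^ 2 := by
      nlinarith [sq_nonneg ((1 - m) - m * Real.exp u)]
    simp only [hD]
    nlinarith
  have hψ'mono : Monotone ψ' := by
    have : ∀ u, 0 ≤ deriv ψ' u := by
      intro u; rw [(hψ'd u).deriv]; exact hψ''nonneg u
    exact monotone_of_deriv_nonneg (fun u => (hψ'd u).differentiableAt) this
  have hψ'0 : ψ' 0 = 0 := by
    simp [ψ', hD]
  have hψmono : MonotoneOn ψ (Set.Ici (0 : ℝ)) := by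
    refine monotoneOn_of_deriv_nonneg (convex_Ici 0)
      ((Differentiable.continuous (fun u => (hψd u).differentiableAt)).continuousOn)
      (fun u _ => (hψd u).differentiableAt.differentiableWithinAt)
      (fun u hu => ?_)
    · rw [(hψd u).deriv]
      rw [interior_Ici] at hu
      have := hψ'mono (le_of_lt hu)
      rw [hψ'0] at this
      exact this
  have hψ0 : ψ 0 = 0 := by simp [ψ, hD]
  have := hψmono (Set.self_mem_Ici) (Set.mem_Ici.2 ht) ht
  rw [hψ0] at this
  simp only [ψ] at this
  linarith

theorem aux15_int {Ω : Type*} [MeasurableSpace Ω] (μ : Measure Ω) [IsProbabilityMeasure μ]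
    {X : Ω → ℝ} (hX : Measurable X) (hb : ∀ᵐ ω ∂μ, X ω ∈ Set.Icc (0 : ℝ) 1) (t : ℝ) :
    Integrable (fun ω => Real.exp (t * X ω)) μ := by
  refine Integrable.mono' (integrable_const (Real.exp |t|))
    ((hX.const_mul t).exp.aestronglyMeasurable) (hb.mono fun ω h => ?_)
  rw [Real.norm_eq_abs, abs_of_pos (Real.exp_pos _), Real.exp_le_exp]
  calc t * X ω ≤ |t * X ω| := le_abs_self _
    _ = |t| * |X ω| := abs_mul t (X ω)
    _ ≤ |t| * 1 := by
        have : |X ω| ≤ 1 := abs_le.2 ⟨by linarith [h.1], h.2⟩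
        exact mul_le_mul_of_nonneg_left this (abs_nonneg t)
    _ = |t| := mul_one _

theorem aux15_intX {Ω : Type*} [MeasurableSpace Ω] (μ : Measure Ω) [IsProbabilityMeasure μ]
    {X : Ω → ℝ} (hX : Measurable X) (hb : ∀ᵐ ω ∂μ, X ω ∈ Set.Icc (0 : ℝ) 1) :
    Integrable X μ := by
  refine Integrable.mono' (integrable_const 1) hX.aestronglyMeasurable (hb.mono fun ω h => ?_)
  rw [Real.norm_eq_abs]
  exact abs_le.2 ⟨by linarith [h.1], h.2⟩

theorem aux15_mgf {Ω : Type*} [MeasurableSpace Ω] (μ : Measure Ω) [IsProbabilityMeasure μ]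
    {X : Ω → ℝ} (hX : Measurable X) (hb : ∀ᵐ ω ∂μ, X ω ∈ Set.Icc (0 : ℝ) 1)
    {t : ℝ} (ht : 0 ≤ t) :
    mgf X μ t ≤ Real.exp ((∫ ω, X ω ∂μ) * t + t ^ 2 / 4) := by
  set m := ∫ ω, X ω ∂μ with hm
  have hXint : Integrable X μ := aux15_intX μ hX hb
  have hm0 : 0 ≤ m := integral_nonneg_of_ae (hb.mono fun ω h => h.1)
  have hm1 : m ≤ 1 := by
    have := integral_mono_ae hXint (integrable_const 1) (hb.mono fun ω h => h.2)
    simpa using this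
  have hpt : ∀ᵐ ω ∂μ, Real.exp (t * X ω) ≤ 1 - X ω + X ω * Real.exp t := by
    refine hb.mono fun ω h => ?_
    have hc := convexOn_exp.2 (Set.mem_univ (0 : ℝ)) (Set.mem_univ t)
      (by linarith [h.2] : (0:ℝ) ≤ 1 - X ω) h.1 (by ring)
    simpa [smul_eq_mul, mul_comm] using hc
  have hint1 : Integrable (fun ω => 1 - X ω) μ := (integrable_const (1:ℝ)).sub hXint
  have hint2 : Integrable (fun ω => X ω * Real.exp t) μ := hXint.mul_const _
  have hRint : Integrable (fun ω => 1 - X ω + X ω * Real.exp t) μ := hint1.add hint2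
  have h1 : mgf X μ t ≤ ∫ ω, (1 - X ω + X ω * Real.exp t) ∂μ :=
    integral_mono_ae (aux15_int μ hX hb t) hRint hpt
  have h2 : ∫ ω, (1 - X ω + X ω * Real.exp t) ∂μ = 1 - m + m * Real.exp t := by
    rw [integral_add hint1 hint2, integral_sub (integrable_const (1:ℝ)) hXint,
      MeasureTheory.integral_mul_const, integral_const]
    simp [hm]
  have hpos : (0:ℝ) < 1 - m + m * Real.exp t := by
    have : (1:ℝ) ≤ Real.exp t := Real.one_le_exp ht
    nlinarith
  calc mgf X μ t ≤ 1 - m + m * Real.exp t := h2 ▸ h1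
    _ = Real.exp (Real.log (1 - m + m * Real.exp t)) := (Real.exp_log hpos).symm
    _ ≤ Real.exp (m * t + t ^ 2 / 4) := Real.exp_le_exp.2 (aux15_analytic hm0 hm1 ht)

theorem aux15_tail {Ω : Type*} [MeasurableSpace Ω] (μ : Measure Ω) [IsProbabilityMeasure μ]
    {T : ℕ} {g : Fin T → Ω → ℝ} (hgmeas : ∀ i, Measurable (g i))
    (hgindep : iIndepFun g μ)
    (hgb : ∀ i, ∀ᵐ ω ∂μ, g i ω ∈ Set.Icc (0 : ℝ) 1)
    {t : ℝ} (ht : 0 ≤ t) (c : ℝ) :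
    (μ {ω | c ≤ ∑ i, g i ω}).toReal ≤
      Real.exp (-t * c + (∑ i, ∫ ω, g i ω ∂μ) * t + T * t ^ 2 / 4) := by
  have hint : ∀ i ∈ Finset.univ, Integrable (fun ω => Real.exp (t * g i ω)) μ :=
    fun i _ => aux15_int μ (hgmeas i) (hgb i) t
  have hSint : Integrable (fun ω => Real.exp (t * (∑ i, g i) ω)) μ :=
    hgindep.integrable_exp_mul_sum hgmeas hint
  have hset : {ω | c ≤ ∑ i, g i ω} = {ω | c ≤ (∑ i, g i) ω} := by
    ext ω; simp [Finset.sum_apply]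
  have h1 := measure_ge_le_exp_mul_mgf (X := ∑ i, g i) (μ := μ) c ht hSint
  rw [hset]
  refine h1.trans ?_
  have h2 : mgf (∑ i, g i) μ t = ∏ i, mgf (g i) μ t := hgindep.mgf_sum hgmeas _
  have h3 : ∏ i, mgf (g i) μ t ≤ ∏ i, Real.exp ((∫ ω, g i ω ∂μ) * t + t ^ 2 / 4) :=
    Finset.prod_le_prod (fun i _ => mgf_nonneg) (fun i _ => aux15_mgf μ (hgmeas i) (hgb i) ht)
  have h4 : ∏ i, Real.exp ((∫ ω, g i ω ∂μ) * t + t ^ 2 / 4)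
      = Real.exp ((∑ i, ∫ ω, g i ω ∂μ) * t + T * t ^ 2 / 4) := by
    rw [← Real.exp_sum, Finset.sum_add_distrib, ← Finset.sum_mul, Finset.sum_const,
      Finset.card_univ, Fintype.card_fin]
    ring_nf
  calc Real.exp (-t * c) * mgf (∑ i, g i) μ t
      ≤ Real.exp (-t * c) * Real.exp ((∑ i, ∫ ω, g i ω ∂μ) * t + T * t ^ 2 / 4) := by
        rw [h2]; exact mul_le_mul_of_nonneg_left (h4 ▸ h3) (Real.exp_pos _).le
    _ = Real.exp (-t * c + ((∑ i, ∫ ω, g i ω ∂μ) * t + T * t ^ 2 / 4)) := (Real.exp_add _ _).symm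
    _ = _ := by ring_nf

set_option maxHeartbeats 2000000 in
/-- Sampling approximation guarantee (Chernoff/Hoeffding bound for the estimator). -/
theorem stmt15 {Ω : Type*} [MeasureSpace Ω] [IsProbabilityMeasure (ℙ : Measure Ω)]
    (n f ε δ : ℝ) (T : ℕ) (hn : 1 ≤ n) (hf : 1 ≤ f)
    (hε : ε ∈ Set.Ioo (0 : ℝ) 1) (hδ : δ ∈ Set.Ioo (0 : ℝ) 1)
    (Y : Fin T → Ω → ℝ)
    (hmeas : ∀ t, Measurable (Y t))
    (hindep : iIndepFun Y ℙ)
    (hrange : ∀ t, ∀ᵐ ω ∂ℙ, Y t ω ∈ Set.Icc (0 : ℝ) 1)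
    (hmean : ∀ t, ∫ ω, Y t ω ∂ℙ = f / n)
    (hT : (T : ℝ) ≥ n ^ 2 * Real.log (2 / δ) / ε ^ 2) :
    (ℙ {ω | ε * f ≤ |(n / T) * ∑ t, Y t ω - f|}).toReal ≤ δ := by
  obtain ⟨hε0, hε1⟩ := hε
  obtain ⟨hδ0, hδ1⟩ := hδ
  have hn0 : (0:ℝ) < n := by linarith
  have hf0 : (0:ℝ) < f := by linarith
  set L := Real.log (2 / δ) with hL
  have hL0 : 0 < L := Real.log_pos (by rw [lt_div_iff₀ hδ0]; linarith)
  have hT0 : (0:ℝ) < (T:ℝ) := lt_of_lt_of_le (by positivity) hT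
  set γ := ε * f / n with hγ
  have hγ0 : 0 < γ := by positivity
  set t := 2 * γ with htdef
  have ht0 : (0:ℝ) ≤ t := by positivity
  -- complementary variables
  set Z : Fin T → Ω → ℝ := fun i ω => 1 - Y i ω with hZ
  have hZmeas : ∀ i, Measurable (Z i) := fun i => measurable_const.sub (hmeas i)
  have hZindep : iIndepFun Z ℙ :=
    hindep.comp (fun _ x => 1 - x) (fun _ => measurable_const.sub measurable_id)
  have hZb : ∀ i, ∀ᵐ ω ∂ℙ, Z i ω ∈ Set.Icc (0:ℝ) 1 := fun i =>
    (hrange i).mono fun ω h => ⟨by simp [hZ]; linarith [h.2], by simp [hZ]; linarith [h.1]⟩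
  have hZmean : ∀ i, ∫ ω, Z i ω ∂ℙ = 1 - f / n := by
    intro i
    have hYint : Integrable (Y i) ℙ := aux15_intX ℙ (hmeas i) (hrange i)
    rw [show Z i = fun ω => (1:ℝ) - Y i ω from rfl, integral_sub (integrable_const 1) hYint,
      integral_const, hmean i]
    simp
  -- tail bounds
  set c1 := (T:ℝ) * (f / n) + (T:ℝ) * γ with hc1
  set c2 := (T:ℝ) * (1 - f / n) + (T:ℝ) * γ with hc2
  have hA := aux15_tail ℙ hmeas hindep hrange ht0 c1
  have hB := aux15_tail ℙ hZmeas hZindep hZb ht0 c2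
  have hsumY : (∑ i : Fin T, ∫ ω, Y i ω ∂ℙ) = (T:ℝ) * (f / n) := by
    simp [hmean, Finset.sum_const, mul_comm]
  have hsumZ : (∑ i : Fin T, ∫ ω, Z i ω ∂ℙ) = (T:ℝ) * (1 - f / n) := by
    simp [hZmean, Finset.sum_const, mul_comm]; ring
  rw [hsumY] at hA
  rw [hsumZ] at hB
  have hexpA : -t * c1 + (T:ℝ) * (f / n) * t + (T:ℝ) * t ^ 2 / 4 = -((T:ℝ) * γ ^ 2) := by
    rw [hc1, htdef]; ring
  have hexpB : -t * c2 + (T:ℝ) * (1 - f / n) * t + (T:ℝ) * t ^ 2 / 4 = -((T:ℝ) * γ ^ 2) := by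
    rw [hc2, htdef]; ring
  rw [hexpA] at hA
  rw [hexpB] at hB
  -- the bound exp(-Tγ²) ≤ δ/2
  have hTγ : L ≤ (T:ℝ) * γ ^ 2 := by
    have h1 : n ^ 2 * L / ε ^ 2 * γ ^ 2 ≤ (T:ℝ) * γ ^ 2 :=
      mul_le_mul_of_nonneg_right hT (by positivity)
    have h2 : n ^ 2 * L / ε ^ 2 * γ ^ 2 = L * f ^ 2 := by
      rw [hγ]; field_simp
    have hf2 : (1:ℝ) ≤ f ^ 2 := by nlinarith
    have h3 : L ≤ L * f ^ 2 := by nlinarith [mul_le_mul_of_nonneg_left hf2 hL0.le]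
    linarith [h2 ▸ h1]
  have hhalf : Real.exp (-((T:ℝ) * γ ^ 2)) ≤ δ / 2 := by
    have : Real.exp (-((T:ℝ) * γ ^ 2)) ≤ Real.exp (-L) :=
      Real.exp_le_exp.2 (by linarith)
    have hexpL : Real.exp (-L) = δ / 2 := by
      rw [hL, Real.exp_neg, Real.exp_log (by positivity)]
      rw [inv_div]
    linarith
  -- set inclusion
  have hincl : {ω | ε * f ≤ |(n / T) * ∑ i, Y i ω - f|} ⊆
      {ω | c1 ≤ ∑ i, Y i ω} ∪ {ω | c2 ≤ ∑ i, Z i ω} := by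
    intro ω hω
    simp only [Set.mem_setOf_eq] at hω
    set S := ∑ i, Y i ω with hS
    have hZsum : ∑ i, Z i ω = (T:ℝ) - S := by
      simp [hZ, Finset.sum_sub_distrib, hS]
    rcases le_abs.1 hω with h | h
    · refine Or.inl ?_
      have hh : ε * f + f ≤ n / (T:ℝ) * S := by linarith
      rw [div_mul_eq_mul_div, le_div_iff₀ hT0] at hh
      show c1 ≤ ∑ i, Y i ω
      rw [hc1, ← hS]
      calc (T:ℝ) * (f / n) + (T:ℝ) * γ = (ε * f + f) * (T:ℝ) / n := by
            rw [hγ]; field_simp; ring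
        _ ≤ S := by rw [div_le_iff₀ hn0]; linarith
    · refine Or.inr ?_
      show c2 ≤ ∑ i, Z i ω
      rw [hc2, hZsum]
      rw [neg_sub] at h
      have hh : n / (T:ℝ) * S ≤ f - ε * f := by linarith
      rw [div_mul_eq_mul_div, div_le_iff₀ hT0] at hh
      have h' : S ≤ (f - ε * f) * (T:ℝ) / n := by
        rw [le_div_iff₀ hn0, mul_comm]
        linarith
      calc (T:ℝ) * (1 - f / n) + (T:ℝ) * γ = (T:ℝ) - (f - ε * f) * (T:ℝ) / n := by
            rw [hγ]; field_simp; ring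
        _ ≤ (T:ℝ) - S := by linarith
  -- assemble
  calc (ℙ {ω | ε * f ≤ |(n / T) * ∑ i, Y i ω - f|}).toReal
      ≤ (ℙ ({ω | c1 ≤ ∑ i, Y i ω} ∪ {ω | c2 ≤ ∑ i, Z i ω})).toReal := by
        apply ENNReal.toReal_mono (measure_ne_top _ _) (measure_mono hincl)
    _ ≤ (ℙ {ω | c1 ≤ ∑ i, Y i ω} + ℙ {ω | c2 ≤ ∑ i, Z i ω}).toReal :=
        ENNReal.toReal_mono (by finiteness) (measure_union_le _ _)
    _ = (ℙ {ω | c1 ≤ ∑ i, Y i ω}).toReal + (ℙ {ω | c2 ≤ ∑ i, Z i ω}).toReal :=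
        ENNReal.toReal_add (measure_ne_top _ _) (measure_ne_top _ _)
    _ ≤ Real.exp (-((T:ℝ) * γ ^ 2)) + Real.exp (-((T:ℝ) * γ ^ 2)) := add_le_add hA hB
    _ ≤ δ / 2 + δ / 2 := add_le_add hhalf hhalf
    _ = δ := by ring
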